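/- arXiv:1511.00198 — 4 statements merged into one kernel-verified Lean document; each statement's English description precedes it below -/
import Mathlib

section
/- The infinite series ∑_{n=1}^∞ (12n^4 - 1)/(4n^4 + 1)^2 converges and equals 1/2. -/
theorem stmt1 :
    HasSum (fun n : ℕ =>
      (12 * ((n : ℝ) + 1) ^ 4 - 1) / (4 * ((n : ℝ) + 1) ^ 4 + 1) ^ 2) (1 / 2) := by
  set f : ℕ → ℝ := fun k => (2 * k + 1) / (2 * (2 * (k : ℝ) ^ 2 + 2 * k + 1) ^ 2) with hf
  have hden : ∀ k : ℕ, (2 * (k : ℝ) ^ 2 + 2 * k + 1) ≠ 0 := by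
    intro k; positivity
  have key : ∀ n : ℕ,
      (12 * ((n : ℝ) + 1) ^ 4 - 1) / (4 * ((n : ℝ) + 1) ^ 4 + 1) ^ 2 = f n - f (n + 1) := by
    intro n
    have h1 := hden n
    have h2 := hden (n + 1)
    have h3 : (4 * ((n : ℝ) + 1) ^ 4 + 1) ≠ 0 := by positivity
    push_cast at h2 ⊢
    simp only [hf]
    push_cast
    field_simp
    ring
  have hnonneg : ∀ n : ℕ, 0 ≤ (12 * ((n : ℝ) + 1) ^ 4 - 1) / (4 * ((n : ℝ) + 1) ^ 4 + 1) ^ 2 := by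
    intro n
    apply div_nonneg _ (by positivity)
    have h : (0:ℝ) ≤ n := Nat.cast_nonneg n
    nlinarith [sq_nonneg ((n : ℝ)), pow_pos (show (0:ℝ) < n + 1 by linarith) 4]
  rw [hasSum_iff_tendsto_nat_of_nonneg hnonneg]
  have hsum : ∀ N : ℕ, ∑ i ∈ Finset.range N,
      (12 * ((i : ℝ) + 1) ^ 4 - 1) / (4 * ((i : ℝ) + 1) ^ 4 + 1) ^ 2 = f 0 - f N := by
    intro N
    rw [Finset.sum_congr rfl (fun i _ => key i)]
    exact Finset.sum_range_sub' f N
  have hf0 : f 0 = 1 / 2 := by norm_num [hf]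
  simp only [hsum, hf0]
  have hlim : Filter.Tendsto f Filter.atTop (nhds 0) := by
    apply squeeze_zero (fun n => by positivity)
      (g := fun n : ℕ => 1 / ((n : ℝ) + 1)) _ tendsto_one_div_add_atTop_nhds_zero_nat
    intro n
    rw [hf, div_le_div_iff₀ (by positivity) (by positivity)]
    nlinarith [sq_nonneg ((n : ℝ)), sq_nonneg ((n : ℝ) + 1), Nat.cast_nonneg (α := ℝ) n]
  have := (tendsto_const_nhds (x := (1/2 : ℝ))).sub hlim
  rw [sub_zero] at this
  exact this
end

section
/- The rational function y(x) = (2x - 1)(2x^2 - 2x - 1)(6x^2 - 6x + 1) / (2(2x^2 - 2x + 1)^6) satisfies the difference equation y(x) - y(x+1) = (1 - 480x^4 + 8736x^8 - 21504x^12 + 5376x^16)/(1 + 4x^4)^6 for all real x. -/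
theorem stmt2 (y : ℝ → ℝ)
    (hy : ∀ x : ℝ, y x = (2 * x - 1) * (2 * x ^ 2 - 2 * x - 1) * (6 * x ^ 2 - 6 * x + 1)
      / (2 * (2 * x ^ 2 - 2 * x + 1) ^ 6)) :
    ∀ x : ℝ, y x - y (x + 1) =
      (1 - 480 * x ^ 4 + 8736 * x ^ 8 - 21504 * x ^ 12 + 5376 * x ^ 16)
        / (1 + 4 * x ^ 4) ^ 6 := by
  intro x
  have h1 : (2 * x ^ 2 - 2 * x + 1 : ℝ) ≠ 0 := by nlinarith [sq_nonneg (2*x-1)]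
  have h2 : (2 * (x+1) ^ 2 - 2 * (x+1) + 1 : ℝ) ≠ 0 := by nlinarith [sq_nonneg (2*x+1)]
  have h3 : (1 + 4 * x ^ 4 : ℝ) ≠ 0 := by positivity
  rw [hy, hy]
  rw [div_sub_div _ _ (by positivity) (by positivity), div_eq_div_iff (by positivity) (by positivity)]
  ring
end

section
/- Let λ be a real number with λ ≠ -2 and λ ≠ -4, and suppose n^4 + λn^2 + (4+λ)^2/4 ≠ 0 for all integers n ≥ 1. Then ∑_{n=1}^∞ 2n/(n^4 + λn^2 + (4+λ)^2/4) = 2(3+λ)/((2+λ)(4+λ)). -/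
theorem stmt13 (l : ℝ) (h2 : l ≠ -2) (h4 : l ≠ -4)
    (hden : ∀ n : ℕ, 1 ≤ n →
      ((n : ℝ) ^ 4 + l * (n : ℝ) ^ 2 + (4 + l) ^ 2 / 4) ≠ 0) :
    ∑' n : ℕ, 2 * ((n : ℝ) + 1)
        / (((n : ℝ) + 1) ^ 4 + l * ((n : ℝ) + 1) ^ 2 + (4 + l) ^ 2 / 4)
      = 2 * (3 + l) / ((2 + l) * (4 + l)) := by
  set c : ℝ := (4 + l) / 2 with hc
  have hc1 : c - 1 ≠ 0 := by
    simp only [hc]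
    intro h
    apply h2
    linarith [h, sub_eq_zero.mp h]
  have hc0 : c ≠ 0 := by
    simp only [hc]
    intro h
    apply h4
    have : 4 + l = 0 := by
      field_simp at h; linarith
    linarith
  obtain ⟨f, hfdef⟩ : ∃ f : ℝ → ℝ, ∀ x, f x = x ^ 2 - 2 * x + c :=
    ⟨fun x => x ^ 2 - 2 * x + c, fun x => rfl⟩
  have hD : ∀ x : ℝ, x ^ 4 + l * x ^ 2 + (4 + l) ^ 2 / 4 = f x * f (x + 2) := by
    intro x; simp only [hfdef, hc]; ring
  -- nonvanishing of f at natural numbers ≥ 1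
  have hf : ∀ n : ℕ, 1 ≤ n → f (n : ℝ) ≠ 0 := by
    intro n hn
    rcases n with _ | _ | _ | m
    · omega
    · intro h
      apply hc1
      simp only [hfdef] at h
      push_cast at h
      linarith
    · intro h
      apply hc0
      simp only [hfdef] at h
      push_cast at h
      linarith
    · have hd := hden (m + 1) (by omega)
      rw [hD] at hd
      have h := right_ne_zero_of_mul hd
      have hcast : ((m + 1 : ℕ) : ℝ) + 2 = ((m + 3 : ℕ) : ℝ) := by push_cast; ring
      rwa [hcast] at h
  -- the summand rewritten in telescoping form
  set a : ℕ → ℝ := fun n => 2 * ((n : ℝ) + 1)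
      / (((n : ℝ) + 1) ^ 4 + l * ((n : ℝ) + 1) ^ 2 + (4 + l) ^ 2 / 4) with ha
  have key : ∀ n : ℕ, a n
      = (1/2) * ((1 / f ((n : ℝ) + 1) - 1 / f ((n : ℝ) + 2))
        + (1 / f ((n : ℝ) + 2) - 1 / f ((n : ℝ) + 3))) := by
    intro n
    have h1 : f ((n : ℝ) + 1) ≠ 0 := by
      have := hf (n + 1) (by omega); push_cast at this; convert this using 2
    have h3 : f ((n : ℝ) + 3) ≠ 0 := by
      have := hf (n + 3) (by omega); push_cast at this; convert this using 2
    have h2' : f ((n : ℝ) + 2) ≠ 0 := by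
      have := hf (n + 2) (by omega); push_cast at this; convert this using 2
    rw [ha]
    simp only
    rw [hD (((n : ℝ) + 1))]
    have : ((n : ℝ) + 1) + 2 = (n : ℝ) + 3 := by ring
    rw [this]
    field_simp
    simp only [hfdef]
    ring
  -- f n ≥ n^2/8 for large n, giving summability
  obtain ⟨N, hN⟩ := exists_nat_ge (2 * |c - 1| + 2)
  have hfbig : ∀ n : ℕ, N ≤ n → (n : ℝ) ^ 2 / 8 ≤ f (n : ℝ) := by
    intro n hn
    have hn2 : (2 : ℝ) ≤ n := le_trans (by nlinarith [abs_nonneg (c - 1)]) (le_trans hN (Nat.cast_le.mpr hn))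
    have hcb : 2 * |c - 1| ≤ (n : ℝ) - 1 := by
      have := le_trans hN (Nat.cast_le.mpr hn); linarith
    have habs : -( |c - 1| ) ≤ c - 1 := neg_abs_le _
    have h1 : ((n : ℝ) - 1) ^ 2 ≥ 2 * |c - 1| := by
      nlinarith [abs_nonneg (c - 1)]
    have : f (n : ℝ) = ((n : ℝ) - 1) ^ 2 + (c - 1) := by simp only [hfdef]; ring
    rw [this]
    nlinarith [abs_nonneg (c - 1)]
  have hsummable : Summable a := by
    apply Summable.of_norm_bounded_eventually_nat (g := fun n => 8 / ((n : ℝ) + 1) ^ 2)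
    · have base : Summable (fun n : ℕ => 1 / ((n : ℝ)) ^ 2) :=
        Real.summable_one_div_nat_pow.mpr one_lt_two
      have shifted := (summable_nat_add_iff 1).mpr base
      have : Summable (fun n : ℕ => 1 / ((n : ℝ) + 1) ^ 2) := by
        apply shifted.congr; intro n; push_cast; ring_nf
      simpa [div_eq_mul_inv, mul_comm] using this.mul_left 8
    · filter_upwards [Filter.eventually_ge_atTop N] with n hn
      have hb1 : (((n : ℝ) + 1)) ^ 2 / 8 ≤ f ((n : ℝ) + 1) := by
        have := hfbig (n + 1) (by omega); push_cast at this; convert this using 2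
      have hb3 : (((n : ℝ) + 3)) ^ 2 / 8 ≤ f ((n : ℝ) + 3) := by
        have := hfbig (n + 3) (by omega); push_cast at this; convert this using 2
      have hp1 : (0 : ℝ) < ((n : ℝ) + 1) ^ 2 / 8 := by positivity
      have hp3 : (0 : ℝ) < ((n : ℝ) + 3) ^ 2 / 8 := by positivity
      have hf1 : (0 : ℝ) < f ((n : ℝ) + 1) := lt_of_lt_of_le hp1 hb1
      have hf3 : (0 : ℝ) < f ((n : ℝ) + 3) := lt_of_lt_of_le hp3 hb3
      have e1 : 1 / f ((n : ℝ) + 1) ≤ 8 / ((n : ℝ) + 1) ^ 2 := by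
        rw [div_le_div_iff₀ hf1 (by positivity)]
        nlinarith
      have e3 : 1 / f ((n : ℝ) + 3) ≤ 8 / ((n : ℝ) + 3) ^ 2 := by
        rw [div_le_div_iff₀ hf3 (by positivity)]
        nlinarith
      have hpos1 : 0 < 1 / f ((n : ℝ) + 1) := by positivity
      have hpos3 : 0 < 1 / f ((n : ℝ) + 3) := by positivity
      have hle3 : 8 / ((n : ℝ) + 3) ^ 2 ≤ 8 / ((n : ℝ) + 1) ^ 2 := by
        apply div_le_div_of_nonneg_left (by norm_num) (by positivity)
        nlinarith [(n.cast_nonneg : (0:ℝ) ≤ (n:ℝ))]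
      rw [key n]
      have : (1/2 : ℝ) * ((1 / f ((n : ℝ) + 1) - 1 / f ((n : ℝ) + 2))
          + (1 / f ((n : ℝ) + 2) - 1 / f ((n : ℝ) + 3)))
          = (1/2) * (1 / f ((n : ℝ) + 1) - 1 / f ((n : ℝ) + 3)) := by ring
      rw [this, Real.norm_eq_abs, abs_mul, abs_of_pos (by norm_num : (0:ℝ) < 1/2)]
      have ha1 : |1 / f ((n : ℝ) + 1)| ≤ 8 / ((n : ℝ) + 1) ^ 2 := by
        rw [abs_of_pos hpos1]; exact e1
      have ha3 : |1 / f ((n : ℝ) + 3)| ≤ 8 / ((n : ℝ) + 1) ^ 2 := by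
        rw [abs_of_pos hpos3]; exact le_trans e3 hle3
      have htri := abs_sub (1 / f ((n : ℝ) + 1)) (1 / f ((n : ℝ) + 3))
      linarith
  -- limit of 1/f along ℕ shifts
  have hftop : Filter.Tendsto (fun n : ℕ => f ((n : ℝ))) Filter.atTop Filter.atTop := by
    have h0 : Filter.Tendsto (fun n : ℕ => (n : ℝ)) Filter.atTop Filter.atTop :=
      tendsto_natCast_atTop_atTop
    have h1 : Filter.Tendsto (fun n : ℕ => ((n : ℝ) - 1)) Filter.atTop Filter.atTop :=
      (Filter.tendsto_atTop_add_const_right _ (-1) h0).congr (fun n => by ring)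
    have h2' : Filter.Tendsto (fun n : ℕ => ((n : ℝ) - 1) ^ 2) Filter.atTop Filter.atTop :=
      (Filter.tendsto_pow_atTop (two_ne_zero)).comp h1
    have h3 := Filter.tendsto_atTop_add_const_right _ (c - 1) h2'
    apply h3.congr
    intro n; simp only [hfdef]; ring
  have hzero : ∀ k : ℕ, Filter.Tendsto (fun n : ℕ => 1 / f ((n : ℝ) + k)) Filter.atTop (nhds 0) := by
    intro k
    have hshift : Filter.Tendsto (fun n : ℕ => f (((n + k : ℕ) : ℝ))) Filter.atTop Filter.atTop :=
      hftop.comp (Filter.tendsto_add_atTop_nat k)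
    have := hshift.inv_tendsto_atTop
    simp only [one_div]
    apply this.congr
    intro n; push_cast; norm_num
  -- partial sums
  have hpartial : ∀ M : ℕ, ∑ n ∈ Finset.range M, a n
      = (1/2) * ((1 / f 1 - 1 / f ((M : ℝ) + 1)) + (1 / f 2 - 1 / f ((M : ℝ) + 2))) := by
    intro M
    have e1 : ∑ n ∈ Finset.range M, (1 / f ((n : ℝ) + 1) - 1 / f (((n + 1 : ℕ) : ℝ) + 1))
        = 1 / f (((0 : ℕ) : ℝ) + 1) - 1 / f ((M : ℝ) + 1) :=
      Finset.sum_range_sub' (fun n => 1 / f ((n : ℝ) + 1)) M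
    have e2 : ∑ n ∈ Finset.range M, (1 / f ((n : ℝ) + 2) - 1 / f (((n + 1 : ℕ) : ℝ) + 2))
        = 1 / f (((0 : ℕ) : ℝ) + 2) - 1 / f ((M : ℝ) + 2) :=
      Finset.sum_range_sub' (fun n => 1 / f ((n : ℝ) + 2)) M
    push_cast at e1 e2
    calc ∑ n ∈ Finset.range M, a n
        = ∑ n ∈ Finset.range M, ((1/2) * ((1 / f ((n : ℝ) + 1) - 1 / f ((n : ℝ) + 2))
            + (1 / f ((n : ℝ) + 2) - 1 / f ((n : ℝ) + 3)))) :=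
          Finset.sum_congr rfl (fun n _ => key n)
      _ = (1/2) * ((∑ n ∈ Finset.range M, (1 / f ((n : ℝ) + 1) - 1 / f ((n : ℝ) + 1 + 1)))
            + (∑ n ∈ Finset.range M, (1 / f ((n : ℝ) + 2) - 1 / f ((n : ℝ) + 1 + 2)))) := by
          rw [← Finset.sum_add_distrib, Finset.mul_sum]
          apply Finset.sum_congr rfl
          intro n _
          ring_nf
      _ = (1/2) * ((1 / f 1 - 1 / f ((M : ℝ) + 1)) + (1 / f 2 - 1 / f ((M : ℝ) + 2))) := by
          rw [e1, e2]
          norm_num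
  -- limit of partial sums
  have hlim : Filter.Tendsto (fun M : ℕ => ∑ n ∈ Finset.range M, a n) Filter.atTop
      (nhds ((1/2) * ((1 / f 1 - 0) + (1 / f 2 - 0)))) := by
    have t1 := hzero 1
    have t2 := hzero 2
    push_cast at t1 t2
    have := (((t1.const_sub (1 / f 1)).add ((t2.const_sub (1 / f 2)))).const_mul (1/2 : ℝ))
    simp only [sub_zero] at this ⊢
    apply this.congr
    intro M
    rw [hpartial M]
    try ring_nf
  have htsum : ∑' n : ℕ, a n = (1/2) * ((1 / f 1 - 0) + (1 / f 2 - 0)) :=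
    tendsto_nhds_unique hsummable.hasSum.tendsto_sum_nat hlim
  rw [show (∑' n : ℕ, 2 * ((n : ℝ) + 1)
        / (((n : ℝ) + 1) ^ 4 + l * ((n : ℝ) + 1) ^ 2 + (4 + l) ^ 2 / 4)) = ∑' n : ℕ, a n from rfl,
    htsum]
  have hf1 : f 1 = c - 1 := by simp only [hfdef]; ring
  have hf2 : f 2 = c := by simp only [hfdef]; ring
  rw [hf1, hf2, hc]
  have h2' : 2 + l ≠ 0 := fun h => h2 (by linarith)
  have h4' : 4 + l ≠ 0 := fun h => h4 (by linarith)
  have e : (4 + l) / 2 - 1 = (2 + l) / 2 := by ring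
  rw [e, one_div_div, one_div_div]
  field_simp
  ring
end

section
/- For every real x ≠ 0, the identity 1/(e^x - 1) = 1/x - 1/2 + ∑_{m=1}^∞ 2x/(x^2 + 4π^2 m^2) holds, with the series converging absolutely. -/
open Complex MeasureTheory Set intervalIntegral
open scoped Real

noncomputable section

namespace Stmt17Aux

/-- The function `cosh (x (t - 1/2))`, complex valued. -/
def f (x : ℝ) (t : ℝ) : ℂ :=
  (Complex.exp (x * (t - 1/2)) + Complex.exp (-(x * (t - 1/2)))) / 2

lemma f_cont (x : ℝ) : Continuous (f x) := by
  unfold f; fun_prop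

lemma f_endpoints (x : ℝ) : f x 0 = f x 1 := by
  simp only [f]
  push_cast
  ring_nf

lemma coeff (x : ℝ) (hx : x ≠ 0) (n : ℤ) :
    fourierCoeffOn (zero_lt_one) (f x) n =
      ((Complex.exp (x/2) - Complex.exp (-(x/2))) * x) / ((x : ℂ)^2 + 4*π^2*n^2) := by
  have hx' : (x : ℂ) ≠ 0 := Complex.ofReal_ne_zero.mpr hx
  have hc1 : (x : ℂ) - 2*π*n*Complex.I ≠ 0 := by
    intro h
    have := congrArg Complex.re h
    simp at this
    exact hx this
  have hc2 : -(x : ℂ) - 2*π*n*Complex.I ≠ 0 := by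
    intro h
    have := congrArg Complex.re h
    simp at this
    exact hx this
  have hc2' : (x : ℂ) + 2*π*n*Complex.I ≠ 0 := by
    intro h
    apply hc2
    rw [show -(x:ℂ) - 2*π*n*Complex.I = -((x:ℂ) + 2*π*n*Complex.I) by ring, h, neg_zero]
  have hd : ((x : ℂ)^2 + 4*π^2*n^2) ≠ 0 := by
    have hfact : (x:ℂ)^2 + 4*π^2*n^2
        = ((x:ℂ) - 2*π*n*Complex.I) * ((x:ℂ) + 2*π*n*Complex.I) := by
      have hI : (Complex.I)^2 = -1 := Complex.I_sq
      linear_combination (4*(π:ℂ)^2*n^2) * hI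
    rw [hfact]
    exact mul_ne_zero hc1 hc2'
  rw [fourierCoeffOn_eq_integral]
  have key : ∀ t : ℝ, fourier (-n) (t : AddCircle ((1:ℝ) - 0)) • f x t
      = (Complex.exp (-(x/2) : ℂ) * Complex.exp (((x:ℂ) - 2*π*n*Complex.I) * t)
        + Complex.exp ((x/2 : ℂ)) * Complex.exp ((-(x:ℂ) - 2*π*n*Complex.I) * t)) / 2 := by
    intro t
    rw [smul_eq_mul, fourier_coe_apply]
    simp only [f]
    rw [← mul_div_assoc, mul_add, ← Complex.exp_add, ← Complex.exp_add,
      ← Complex.exp_add, ← Complex.exp_add]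
    congr 2 <;> push_cast <;> ring
  simp_rw [key]
  rw [intervalIntegral.integral_div,
    intervalIntegral.integral_add
      ((Continuous.intervalIntegrable (by fun_prop) _ _))
      ((Continuous.intervalIntegrable (by fun_prop) _ _)),
    intervalIntegral.integral_const_mul, intervalIntegral.integral_const_mul,
    integral_exp_mul_complex hc1, integral_exp_mul_complex hc2]
  push_cast
  have e1 : Complex.exp (((x:ℂ) - 2*π*n*Complex.I) * 1) = Complex.exp x := by
    rw [mul_one, sub_eq_add_neg, Complex.exp_add,
      show -(2*(π:ℂ)*n*Complex.I) = (-n : ℤ) * (2*π*Complex.I) by push_cast; ring,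
      Complex.exp_int_mul_two_pi_mul_I, mul_one]
  have e2 : Complex.exp ((-(x:ℂ) - 2*π*n*Complex.I) * 1) = Complex.exp (-x) := by
    rw [mul_one, sub_eq_add_neg, Complex.exp_add,
      show -(2*(π:ℂ)*n*Complex.I) = (-n : ℤ) * (2*π*Complex.I) by push_cast; ring,
      Complex.exp_int_mul_two_pi_mul_I, mul_one]
  rw [e1, e2]
  simp only [mul_zero, Complex.exp_zero, sub_zero]
  simp only [div_one, one_smul]
  have h1 : Complex.exp (-(↑x/2) : ℂ) * (Complex.exp (x:ℂ) - 1)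
      = Complex.exp (↑x/2 : ℂ) - Complex.exp (-(↑x/2) : ℂ) := by
    rw [mul_sub, ← Complex.exp_add, mul_one]
    ring_nf
  have h2 : Complex.exp ((↑x/2 : ℂ)) * (Complex.exp (-(x:ℂ)) - 1)
      = Complex.exp (-(↑x/2) : ℂ) - Complex.exp (↑x/2 : ℂ) := by
    rw [mul_sub, ← Complex.exp_add, mul_one]
    ring_nf
  rw [← mul_div_assoc, ← mul_div_assoc, h1, h2]
  field_simp
  rw [eq_div_iff (by rw [show (x:ℂ)^2 + (π:ℂ)^2*(n:ℂ)^2*4 = (x:ℂ)^2 + 4*(π:ℂ)^2*(n:ℂ)^2 by ring]; exact hd)]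
  ring_nf
  rw [Complex.I_sq]
  ring


def F (x : ℝ) : AddCircle (1 : ℝ) → ℂ := AddCircle.liftIco 1 0 (f x)

lemma F_cont (x : ℝ) : Continuous (F x) :=
  AddCircle.liftIco_zero_continuous (f_endpoints x) (f_cont x).continuousOn

lemma coeffF (x : ℝ) (hx : x ≠ 0) (n : ℤ) :
    fourierCoeff (F x) n =
      ((Complex.exp (x/2) - Complex.exp (-(x/2))) * x) / ((x : ℂ)^2 + 4*π^2*(n:ℂ)^2) := by
  haveI : Fact (0 < (1:ℝ)) := ⟨one_pos⟩
  rw [F, fourierCoeff_liftIco_eq, ← coeff x hx n]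
  congr 1
  norm_num

lemma summable_aux (x : ℝ) (hx : x ≠ 0) :
    Summable (fun n : ℕ => 1 / (x^2 + 4*π^2*(n:ℝ)^2)) := by
  refine (summable_nat_add_iff 1).mp ?_
  have hs : Summable (fun n : ℕ => (1:ℝ)/(4*π^2) * (1 / ((n:ℝ)+1)^2)) := by
    apply Summable.mul_left
    have h1 : Summable (fun n : ℕ => 1 / ((n:ℝ))^2) := by
      have := (Real.summable_one_div_nat_pow (p := 2)).mpr (by norm_num)
      simpa using this
    have h2 := (summable_nat_add_iff 1).mpr h1
    refine h2.congr fun n => ?_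
    push_cast
    ring
  refine hs.of_nonneg_of_le (fun n => by positivity) fun n => ?_
  rw [mul_one_div, div_div]
  apply one_div_le_one_div_of_le
  · positivity
  · push_cast
    nlinarith [sq_nonneg x, sq_nonneg ((n:ℝ)+1), Real.pi_pos]

lemma norm_term (x : ℝ) (K : ℂ) (n : ℤ) :
    ‖K / ((x : ℂ)^2 + 4*π^2*(n:ℂ)^2)‖ = ‖K‖ * (1 / (x^2 + 4*π^2*((n:ℤ):ℝ)^2)) := by
  have h : ((x : ℂ)^2 + 4*(π:ℂ)^2*(n:ℂ)^2) = ((x^2 + 4*π^2*((n:ℤ):ℝ)^2 : ℝ) : ℂ) := by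
    push_cast; ring
  rw [norm_div, h, Complex.norm_real, Real.norm_eq_abs,
    _root_.abs_of_nonneg (by positivity), mul_one_div]

lemma hasSum_int (x : ℝ) (hx : x ≠ 0) :
    HasSum (fun n : ℤ =>
        ((Complex.exp (x/2) - Complex.exp (-(x/2))) * x) / ((x : ℂ)^2 + 4*π^2*(n:ℂ)^2))
      ((Complex.exp (-(x/2)) + Complex.exp (x/2)) / 2) := by
  haveI : Fact (0 < (1:ℝ)) := ⟨one_pos⟩
  set K : ℂ := (Complex.exp (x/2) - Complex.exp (-(x/2))) * (x:ℂ) with hK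
  have hsum : Summable (fun n : ℤ => K / ((x : ℂ)^2 + 4*π^2*(n:ℂ)^2)) := by
    apply Summable.of_norm
    have hnat : Summable (fun n : ℕ => ‖K‖ * (1 / (x^2 + 4*π^2*(n:ℝ)^2))) :=
      (summable_aux x hx).mul_left _
    apply Summable.of_nat_of_neg
    · refine hnat.congr fun n => ?_
      rw [norm_term]
      push_cast
      ring_nf
    · refine hnat.congr fun n => ?_
      rw [norm_term]
      push_cast
      ring_nf
  have hsumF : Summable (fourierCoeff (F x)) :=
    hsum.congr fun n => (coeffF x hx n).symm
  have hpt := has_pointwise_sum_fourier_series_of_summable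
    (f := ⟨F x, F_cont x⟩) hsumF (0 : AddCircle (1:ℝ))
  simp only [fourier_eval_zero, smul_eq_mul, mul_one, ContinuousMap.coe_mk] at hpt
  have hF0 : F x (0 : AddCircle (1:ℝ)) = (Complex.exp (-(x/2)) + Complex.exp (x/2)) / 2 := by
    rw [← QuotientAddGroup.mk_zero, F,
      AddCircle.liftIco_coe_apply (by norm_num : (0:ℝ) ∈ Set.Ico 0 (0+1))]
    norm_num [f]
    ring_nf
  rw [hF0] at hpt
  have hfe : (fun n : ℤ =>
      ((Complex.exp (x/2) - Complex.exp (-(x/2))) * (x:ℂ)) / ((x : ℂ)^2 + 4*π^2*(n:ℂ)^2))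
      = fun i : ℤ => fourierCoeff (F x) i := funext fun n => (coeffF x hx n).symm
  rw [hfe]
  exact hpt

lemma hasSum_real (x : ℝ) (hx : x ≠ 0) :
    HasSum (fun m : ℕ => 2 * x / (x ^ 2 + 4 * π ^ 2 * ((m : ℝ) + 1) ^ 2))
      (1 / (Real.exp x - 1) - (1 / x - 1 / 2)) := by
  have hx' : (x : ℂ) ≠ 0 := Complex.ofReal_ne_zero.mpr hx
  have hu : Complex.exp ((x:ℂ)/2) ≠ 0 := Complex.exp_ne_zero _
  have hv : Complex.exp (-((x:ℂ)/2)) = (Complex.exp ((x:ℂ)/2))⁻¹ := by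
    rw [← Complex.exp_neg]
  have hex : Complex.exp (x:ℂ) = Complex.exp ((x:ℂ)/2) * Complex.exp ((x:ℂ)/2) := by
    rw [← Complex.exp_add]; norm_num
  have hE1 : Complex.exp (x:ℂ) - 1 ≠ 0 := by
    intro h
    rw [sub_eq_zero, ← Complex.ofReal_exp, show (1:ℂ) = ((1:ℝ):ℂ) by norm_num,
      Complex.ofReal_inj] at h
    exact hx (Real.exp_injective (by rw [h, Real.exp_zero]))
  have hS : Complex.exp ((x:ℂ)/2) - Complex.exp (-((x:ℂ)/2)) ≠ 0 := by
    rw [hv, sub_ne_zero]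
    intro h
    have h2 : Complex.exp ((x:ℂ)/2) * Complex.exp ((x:ℂ)/2) = 1 := by
      nth_rewrite 2 [h]
      exact mul_inv_cancel₀ hu
    rw [← hex, ← sub_eq_zero] at h2
    exact hE1 h2
  have hD : ∀ n : ℕ, ((x:ℂ)^2 + 4*(π:ℂ)^2*((n:ℂ)+1)^2) ≠ 0 := by
    intro n h
    have hpos : (0:ℝ) < x^2 + 4*π^2*((n:ℝ)+1)^2 := by positivity
    rw [show ((x:ℂ)^2 + 4*(π:ℂ)^2*((n:ℂ)+1)^2)
        = ((x^2 + 4*π^2*((n:ℝ)+1)^2 : ℝ) : ℂ) by push_cast; ring,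
      Complex.ofReal_eq_zero] at h
    linarith
  have h1 := (hasSum_int x hx).nat_add_neg
  have h2 := (hasSum_nat_add_iff' 1).mpr h1
  simp only [Finset.range_one, Finset.sum_singleton] at h2
  have h3 := h2.div_const (Complex.exp ((x:ℂ)/2) - Complex.exp (-((x:ℂ)/2)))
  rw [← Complex.hasSum_ofReal]
  convert h3 using 2 with n
  · rfl
  · push_cast
    rw [show (-((n:ℂ)+1))^2 = ((n:ℂ)+1)^2 by ring, ← add_div, div_div,
      div_eq_div_iff (hD n) (mul_ne_zero (hD n) hS)]
    ring
  · push_cast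
    norm_num
    rw [hex, hv]
    have hSu : Complex.exp ((x:ℂ)/2) - (Complex.exp ((x:ℂ)/2))⁻¹ ≠ 0 := by
      rw [← hv]; exact hS
    have hE1u : Complex.exp ((x:ℂ)/2) * Complex.exp ((x:ℂ)/2) - 1 ≠ 0 := by
      rw [← hex]; exact hE1
    field_simp [hx', hu, hSu, hE1u, (by rw [sq]; exact hE1u : Complex.exp ((x:ℂ)/2)^2 - 1 ≠ 0)]
    ring

end Stmt17Aux

theorem stmt17 (x : ℝ) (hx : x ≠ 0) :
    Summable (fun m : ℕ =>
      |2 * x / (x ^ 2 + 4 * Real.pi ^ 2 * ((m : ℝ) + 1) ^ 2)|) ∧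
    1 / (Real.exp x - 1)
      = 1 / x - 1 / 2 + ∑' m : ℕ, 2 * x / (x ^ 2 + 4 * Real.pi ^ 2 * ((m : ℝ) + 1) ^ 2) := by
  have h := Stmt17Aux.hasSum_real x hx
  constructor
  · exact h.summable.abs
  · rw [h.tsum_eq]
    ring
end
end
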